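/- Let Γ be a group of automorphisms of the group G such that the external semidirect product E = G ⋊ Γ is locally nilpotent, and let H be a Γ-invariant subgroup of G which is a C_{Aut G}(Γ)-basis. If either Γ is finitely generated or E is hypercentral, then C_E(H) = C_E(G); in particular, H is an Inn-basis of G (i.e., C_G(H) = Z(G)). -/

import Mathlib

universe u

theorem Subgroup.normal_iSup_of_normal {G : Type u} [Group G] {ι : Sort*}
    (f : ι → Subgroup G) (h : ∀ i, (f i).Normal) : (⨆ i, f i).Normal := by
  constructor
  intro x hx g
  refine Subgroup.iSup_induction (C := fun y => g * y * g⁻¹ ∈ ⨆ i, f i) f hx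
    (fun i y hy => le_iSup f i ((h i).conj_mem y hy g)) (by simpa using Subgroup.one_mem _) ?_
  intro a b ha hb
  have hab : g * (a * b) * g⁻¹ = (g * a * g⁻¹) * (g * b * g⁻¹) := by group
  rw [hab]; exact mul_mem ha hb

/-- The transfinite upper central series of a group, as ordinal-indexed normal subgroups. -/
noncomputable def transUpperCentralSeriesAux (G : Type u) [Group G] :
    Ordinal.{u} → {H : Subgroup G // H.Normal} := fun o =>
  Ordinal.limitRecOn o
    ⟨⊥, inferInstance⟩
    (fun _ Z => ⟨@upperCentralSeriesStep G _ Z.1 Z.2, by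
      haveI := Z.2; show (Subgroup.upperCentralSeriesStep Z.1).Normal
      rw [Subgroup.upperCentralSeriesStep_eq_comap_center]
      exact Subgroup.Normal.comap inferInstance _⟩)
    (fun o _ ih => ⟨⨆ (o' : Ordinal.{u}) (ho' : o' < o), (ih o' ho').1,
      Subgroup.normal_iSup_of_normal _ fun o' =>
        Subgroup.normal_iSup_of_normal _ fun ho' => (ih o' ho').2⟩)

/-- The transfinite upper central series. -/
noncomputable def transUpperCentralSeries (G : Type u) [Group G] (o : Ordinal.{u}) :
    Subgroup G := (transUpperCentralSeriesAux G o).1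

/-- The hypercentre of a group: the union of the transfinite upper central series. -/
noncomputable def hypercenter (G : Type u) [Group G] : Subgroup G :=
  ⨆ o : Ordinal.{u}, transUpperCentralSeries G o

/-- A group is hypercentral if it equals the union of its transfinite upper central series. -/
def IsHypercentral (G : Type u) [Group G] : Prop := hypercenter G = ⊤

/-- The hypercentral length: the least ordinal `o` with `Z_o(G) = G`. -/
noncomputable def hypercentralLength (G : Type u) [Group G] : Ordinal.{u} :=
  sInf {o : Ordinal.{u} | transUpperCentralSeries G o = ⊤}

/-- A group is locally nilpotent if every finitely generated subgroup is nilpotent. -/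
def IsLocallyNilpotent (G : Type*) [Group G] : Prop :=
  ∀ S : Subgroup G, S.FG → Group.IsNilpotent S


section Hyper

variable {X : Type u} [Group X]

lemma tucs_zero (G : Type u) [Group G] : transUpperCentralSeries G 0 = ⊥ := by
  unfold transUpperCentralSeries transUpperCentralSeriesAux
  rw [Ordinal.limitRecOn_zero]

lemma tucs_succ (G : Type u) [Group G] (o : Ordinal.{u}) :
    transUpperCentralSeries G (Order.succ o) =
      @upperCentralSeriesStep G _ (transUpperCentralSeries G o)
        (transUpperCentralSeriesAux G o).2 := by
  unfold transUpperCentralSeries transUpperCentralSeriesAux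
  rw [Ordinal.limitRecOn_succ]

lemma tucs_limit (G : Type u) [Group G] {o : Ordinal.{u}} (h : Order.IsSuccLimit o) :
    transUpperCentralSeries G o =
      ⨆ (o' : Ordinal.{u}) (_ : o' < o), transUpperCentralSeries G o' := by
  unfold transUpperCentralSeries transUpperCentralSeriesAux
  rw [Ordinal.limitRecOn_limit _ _ _ _ h]

lemma le_ucsStep (K : Subgroup X) [hK : K.Normal] : K ≤ upperCentralSeriesStep K := by
  intro x hx
  intro y
  have : x * (y * x⁻¹ * y⁻¹) ∈ K := mul_mem hx (by simpa [mul_assoc] using hK.conj_mem x⁻¹ (inv_mem hx) y)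
  simpa [mul_assoc, commutatorElement_def] using this

lemma ucsStep_mono {A B : Subgroup X} [A.Normal] [B.Normal] (h : A ≤ B) :
    upperCentralSeriesStep A ≤ upperCentralSeriesStep B := fun x hx y => h (hx y)

lemma tucs_mono (G : Type u) [Group G] : Monotone (transUpperCentralSeries G) := by
  have key : ∀ o o' : Ordinal.{u}, o' < o →
      transUpperCentralSeries G o' ≤ transUpperCentralSeries G o := by
    intro o
    induction o using Ordinal.induction with
    | _ o IH =>
      intro o' ho'
      rcases Ordinal.zero_or_succ_or_isSuccLimit o with h0 | ⟨k, hk⟩ | hl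
      · exact absurd (h0 ▸ ho') (not_lt_of_ge (zero_le (a := o')))
      · subst hk
        have hk' : o' ≤ k := Order.lt_succ_iff.mp ho'
        have hstep : transUpperCentralSeries G k ≤
            transUpperCentralSeries G (Order.succ k) := by
          rw [tucs_succ]
          exact @le_ucsStep G _ _ (transUpperCentralSeriesAux G k).2
        rcases hk'.lt_or_eq with h | h
        · exact (IH k (Order.lt_succ k) o' h).trans hstep
        · exact h ▸ hstep
      · rw [tucs_limit G hl]
        exact le_iSup₂ (f := fun o'' (_ : o'' < o) => transUpperCentralSeries G o'') o' ho'
  intro a b hab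
  rcases hab.lt_or_eq with h | h
  · exact key b a h
  · exact h ▸ le_rfl

lemma tucs_directed (G : Type u) [Group G] :
    Directed (· ≤ ·) (transUpperCentralSeries G) := fun i j =>
  (le_total i j).elim (fun h => ⟨j, tucs_mono G h, le_rfl⟩)
    (fun h => ⟨i, le_rfl, tucs_mono G h⟩)

lemma mem_hypercenter_iff {x : X} :
    x ∈ hypercenter X ↔ ∃ o : Ordinal.{u}, x ∈ transUpperCentralSeries X o :=
  Subgroup.mem_iSup_of_directed (tucs_directed X)

lemma mem_tucs_limit {o : Ordinal.{u}} (h : Order.IsSuccLimit o) {x : X}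
    (hx : x ∈ transUpperCentralSeries X o) :
    ∃ o' < o, x ∈ transUpperCentralSeries X o' := by
  rw [tucs_limit X h, iSup_subtype'] at hx
  haveI : Nonempty {o' : Ordinal.{u} // o' < o} := ⟨⟨0, h.pos⟩⟩
  have hdir : Directed (· ≤ ·)
      (fun p : {o' : Ordinal.{u} // o' < o} => transUpperCentralSeries X p.1) := fun i j =>
    (le_total i.1 j.1).elim (fun hij => ⟨j, tucs_mono X hij, le_rfl⟩)
      (fun hij => ⟨i, le_rfl, tucs_mono X hij⟩)
  obtain ⟨⟨o', ho'⟩, hmem⟩ := (Subgroup.mem_iSup_of_directed hdir).mp hx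
  exact ⟨o', ho', hmem⟩

end Hyper
section Hyper2

variable {X : Type u} [Group X]

lemma exists_center_of_normal (hX : IsHypercentral X) {N : Subgroup X}
    (hN : N.Normal) (hnt : N ≠ ⊥) :
    ∃ z ∈ N, z ≠ 1 ∧ z ∈ Subgroup.center X := by
  obtain ⟨x, hxN, hx1⟩ : ∃ x ∈ N, x ≠ 1 := by
    by_contra hcon
    push_neg at hcon
    exact hnt (Subgroup.eq_bot_iff_forall N |>.mpr hcon)
  set T : Set Ordinal.{u} := {o | ∃ y ∈ N, y ≠ 1 ∧ y ∈ transUpperCentralSeries X o} with hT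
  have hTne : T.Nonempty := by
    have : x ∈ hypercenter X := by rw [hX]; trivial
    obtain ⟨o, ho⟩ := mem_hypercenter_iff.mp this
    exact ⟨o, x, hxN, hx1, ho⟩
  set o₀ := Ordinal.lt_wf.min T hTne with ho₀
  obtain ⟨y, hyN, hy1, hyZ⟩ : o₀ ∈ T := Ordinal.lt_wf.min_mem T hTne
  rcases Ordinal.zero_or_succ_or_isSuccLimit o₀ with h0 | ⟨k, hk⟩ | hl
  · rw [h0, tucs_zero] at hyZ
    exact absurd (Subgroup.mem_bot.mp hyZ) hy1
  · -- successor case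
    rw [← hk, tucs_succ] at hyZ
    refine ⟨y, hyN, hy1, Subgroup.mem_center_iff.mpr fun g => ?_⟩
    have hc : y * g * y⁻¹ * g⁻¹ = 1 := by
      by_contra hc
      have hmemZ : y * g * y⁻¹ * g⁻¹ ∈ transUpperCentralSeries X k := hyZ g
      have hmemN : y * g * y⁻¹ * g⁻¹ ∈ N := by
        have : g * y⁻¹ * g⁻¹ ∈ N := by
          simpa [mul_assoc] using hN.conj_mem y⁻¹ (inv_mem hyN) g
        simpa [mul_assoc] using mul_mem hyN this
      have hkT : k ∈ T := ⟨_, hmemN, hc, hmemZ⟩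
      have hko : k < o₀ := by rw [← hk]; exact Order.lt_succ k
      exact Ordinal.lt_wf.not_lt_min T hkT hko
    have h2 : y * g * y⁻¹ = g := by rwa [mul_inv_eq_one] at hc
    calc g * y = (y * g * y⁻¹) * y := by rw [h2]
      _ = y * g := by group
  · exfalso
    obtain ⟨o', ho', hmem⟩ := mem_tucs_limit hl hyZ
    exact Ordinal.lt_wf.not_lt_min T ⟨y, hyN, hy1, hmem⟩ ho'

lemma IsHypercentral.of_surjective {Y : Type u} [Group Y] (f : X →* Y)
    (hf : Function.Surjective f) (hX : IsHypercentral X) : IsHypercentral Y := by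
  have claim : ∀ o : Ordinal.{u},
      (transUpperCentralSeries X o).map f ≤ transUpperCentralSeries Y o := by
    intro o
    induction o using Ordinal.induction with
    | _ o IH =>
      rcases Ordinal.zero_or_succ_or_isSuccLimit o with h0 | ⟨k, hk⟩ | hl
      · subst h0; rw [tucs_zero, tucs_zero, Subgroup.map_bot]
      · subst hk
        rw [tucs_succ, tucs_succ]
        rintro y ⟨x, hx, rfl⟩
        intro b
        obtain ⟨a, rfl⟩ := hf b
        have : f (x * a * x⁻¹ * a⁻¹) ∈ transUpperCentralSeries Y k :=
          IH k (Order.lt_succ k) ⟨_, hx a, rfl⟩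
        simpa [map_mul, map_inv, commutatorElement_def] using this
      · rw [tucs_limit X hl, tucs_limit Y hl, Subgroup.map_iSup]
        refine iSup_le fun o' => ?_
        rw [Subgroup.map_iSup]
        exact iSup_le fun ho' => (IH o' ho').trans
          (le_iSup₂ (f := fun o'' (_ : o'' < o) => transUpperCentralSeries Y o'') o' ho')
  rw [IsHypercentral, eq_top_iff]
  calc (⊤ : Subgroup Y) = (⊤ : Subgroup X).map f := (Subgroup.map_top_of_surjective f hf).symm
    _ = (hypercenter X).map f := by rw [hX]
    _ = ⨆ o : Ordinal.{u}, (transUpperCentralSeries X o).map f := by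
        rw [hypercenter, Subgroup.map_iSup]
    _ ≤ ⨆ o : Ordinal.{u}, transUpperCentralSeries Y o := iSup_mono claim
    _ = hypercenter Y := rfl

lemma IsHypercentral.subgroup (hX : IsHypercentral X) (L : Subgroup X) :
    IsHypercentral L := by
  have claim : ∀ o : Ordinal.{u}, ∀ x : L, (x : X) ∈ transUpperCentralSeries X o →
      x ∈ transUpperCentralSeries L o := by
    intro o
    induction o using Ordinal.induction with
    | _ o IH =>
      rcases Ordinal.zero_or_succ_or_isSuccLimit o with h0 | ⟨k, hk⟩ | hl
      · subst h0
        intro x hx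
        rw [tucs_zero] at hx ⊢
        rw [Subgroup.mem_bot] at hx ⊢
        exact Subtype.ext hx
      · subst hk
        intro x hx
        rw [tucs_succ] at hx ⊢
        intro y
        refine IH k (Order.lt_succ k) _ ?_
        simpa [commutatorElement_def] using hx (y : X)
      · intro x hx
        obtain ⟨o', ho', hmem⟩ := mem_tucs_limit hl hx
        rw [tucs_limit (↥L) hl]
        exact le_iSup₂ (f := fun o'' (_ : o'' < o) => transUpperCentralSeries (↥L) o'')
          o' ho' (IH o' ho' x hmem)
  rw [IsHypercentral, eq_top_iff]
  intro x _
  have : (x : X) ∈ hypercenter X := by rw [hX]; trivial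
  obtain ⟨o, ho⟩ := mem_hypercenter_iff.mp this
  exact Subgroup.mem_iSup_of_directed (tucs_directed (↥L)) |>.mpr ⟨o, claim o x ho⟩

lemma IsHypercentral.of_isNilpotent (hX : Group.IsNilpotent X) : IsHypercentral X := by
  have claim : ∀ n : ℕ, upperCentralSeries X n ≤ transUpperCentralSeries X n := by
    intro n
    induction n with
    | zero =>
      change (⊥ : Subgroup X) ≤ _
      exact bot_le
    | succ n IHn =>
      have hcast : ((n + 1 : ℕ) : Ordinal.{u}) = Order.succ (n : Ordinal.{u}) := by
        rw [← Ordinal.add_one_eq_succ, Nat.cast_add, Nat.cast_one]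
      rw [hcast, tucs_succ]
      intro x hx
      intro y
      exact IHn (hx y)
  obtain ⟨n, hn⟩ := hX.nilpotent'
  rw [IsHypercentral, eq_top_iff]
  calc (⊤ : Subgroup X) = upperCentralSeries X n := hn.symm
    _ ≤ transUpperCentralSeries X n := claim n
    _ ≤ hypercenter X := le_iSup (transUpperCentralSeries X) (n : Ordinal.{u})

lemma key_aux {A : Type u} [Group A] (K M : Subgroup A) (hM : IsHypercentral M)
    (hnorm : ∀ m ∈ M, ∀ k ∈ K, m * k * m⁻¹ ∈ K)
    (htriv : ∀ z ∈ K, z ∈ M → (∀ m ∈ M, z * m = m * z) → z = 1)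
    {φ : A} (hφK : φ ∈ K) (hφM : φ ∈ M) : φ = 1 := by
  set N : Subgroup M := K.subgroupOf M with hNdef
  have hNn : N.Normal := by
    constructor
    intro n hn m
    rw [hNdef, Subgroup.mem_subgroupOf] at hn ⊢
    simpa using hnorm (m : A) m.2 (n : A) hn
  by_contra hφ
  have hne : N ≠ ⊥ := by
    intro hbot
    have hmem : (⟨φ, hφM⟩ : M) ∈ N := Subgroup.mem_subgroupOf.mpr hφK
    rw [hbot, Subgroup.mem_bot] at hmem
    exact hφ (congrArg Subtype.val hmem)
  obtain ⟨z, hzN, hz1, hzc⟩ := exists_center_of_normal hM hNn hne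
  have : (z : A) = 1 := by
    refine htriv (z : A) (Subgroup.mem_subgroupOf.mp hzN) z.2 fun m hm => ?_
    have := Subgroup.mem_center_iff.mp hzc ⟨m, hm⟩
    have := congrArg Subtype.val this.symm
    simpa using this
  exact hz1 (Subtype.ext this)

end Hyper2
/-- Let `Γ` be a group of automorphisms of `G` with `E = G ⋊ Γ` locally nilpotent, and let
`H` be a `Γ`-invariant subgroup of `G` which is a `C_{Aut G}(Γ)`-basis.  If either `Γ` is
finitely generated or `E` is hypercentral, then `C_E(H) = C_E(G)`; in particular `H` is an
Inn-basis of `G`, i.e. `C_G(H) = Z(G)`. -/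
theorem centralizer_eq_of_CAutBasis {G : Type u} [Group G]
    (Γ : Subgroup (MulAut G))
    (hE : IsLocallyNilpotent (G ⋊[Γ.subtype] Γ))
    (H : Subgroup G)
    (hinv : ∀ γ ∈ Γ, H.map (γ : MulAut G).toMonoidHom = H)
    (hbasis : ∀ φ : MulAut G, (∀ γ ∈ Γ, φ * γ = γ * φ) → (∀ h ∈ H, φ h = h) → φ = 1)
    (hcase : Group.FG Γ ∨ IsHypercentral (G ⋊[Γ.subtype] Γ)) :
    Subgroup.centralizer ((H.map (SemidirectProduct.inl :
        G →* (G ⋊[Γ.subtype] Γ))) : Set (G ⋊[Γ.subtype] Γ)) =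
      Subgroup.centralizer (((⊤ : Subgroup G).map (SemidirectProduct.inl :
        G →* (G ⋊[Γ.subtype] Γ))) : Set (G ⋊[Γ.subtype] Γ)) ∧
      Subgroup.centralizer (H : Set G) = Subgroup.center G := by
  -- the conjugation homomorphism ψ : (G ⋊[Γ.subtype] Γ) →* MulAut G
  have hcompat : ∀ γ : Γ, (MulAut.conj : G →* MulAut G).comp
      ((Γ.subtype γ).toMonoidHom) =
      (MulAut.conj ((Γ.subtype : Γ →* MulAut G) γ)).toMonoidHom.comp
        (MulAut.conj : G →* MulAut G) := by
    intro γ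
    ext x y
    show (γ : MulAut G) x * y * ((γ : MulAut G) x)⁻¹ =
      (γ : MulAut G) (x * ((γ : MulAut G)⁻¹ y) * x⁻¹)
    simp [map_mul, map_inv, mul_assoc]
  set ψ : (G ⋊[Γ.subtype] Γ) →* MulAut G :=
    SemidirectProduct.lift (MulAut.conj : G →* MulAut G) (Γ.subtype : Γ →* MulAut G)
      hcompat with hψdef
  have hψinl : ∀ g : G, ψ (SemidirectProduct.inl g) = MulAut.conj g := fun g =>
    SemidirectProduct.lift_inl _ _ _ g
  have hψinr : ∀ γ : Γ, ψ (SemidirectProduct.inr γ) = (γ : MulAut G) := fun γ =>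
    SemidirectProduct.lift_inr _ _ _ γ
  have hψeval : ∀ (a : G ⋊[Γ.subtype] Γ) (x : G),
      (ψ a) x = a.left * (a.right : MulAut G) x * a.left⁻¹ := by
    intro a x
    rw [← SemidirectProduct.inl_left_mul_inr_right a, map_mul, hψinl, hψinr]
    simp [MulAut.mul_apply, MulAut.conj_apply]
  -- the subgroup of automorphisms fixing H pointwise
  set K : Subgroup (MulAut G) :=
    { carrier := {α : MulAut G | ∀ h ∈ H, α h = h}
      one_mem' := fun h _ => rfl
      mul_mem' := by
        intro α β hα hβ h hh
        show α (β h) = h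
        rw [hβ h hh, hα h hh]
      inv_mem' := by
        intro α hα h hh
        show α⁻¹ h = h
        have := hα h hh
        calc α⁻¹ h = α⁻¹ (α h) := by rw [this]
          _ = h := by simp } with hKdef
  have hmemK : ∀ α : MulAut G, α ∈ K ↔ ∀ h ∈ H, α h = h := fun _ => Iff.rfl
  -- Γ normalizes K
  have hKγ : ∀ γ ∈ Γ, ∀ α ∈ K, γ * α * γ⁻¹ ∈ K := by
    intro γ hγ α hα h hh
    have hγinv : H.map ((γ⁻¹ : MulAut G)).toMonoidHom = H := by
      exact hinv γ⁻¹ (inv_mem hγ)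
    have hh' : (γ⁻¹ : MulAut G) h ∈ H := by
      rw [← hγinv]
      exact ⟨h, hh, rfl⟩
    show (γ * α * γ⁻¹) h = h
    rw [MulAut.mul_apply, MulAut.mul_apply]
    rw [hα _ hh']
    show γ (γ⁻¹ h) = h
    simp
  have hKγnorm : ∀ γ ∈ Γ, (γ : MulAut G) ∈ Subgroup.normalizer (K : Set (MulAut G)) := by
    intro γ hγ
    rw [Subgroup.mem_normalizer_iff]
    intro α
    constructor
    · exact fun hα => hKγ γ hγ α hα
    · intro hα
      have := hKγ γ⁻¹ (inv_mem hγ) _ hα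
      convert this using 1
      group
  -- the core argument
  have core : ∀ e ∈ Subgroup.centralizer ((H.map (SemidirectProduct.inl :
      G →* (G ⋊[Γ.subtype] Γ))) : Set (G ⋊[Γ.subtype] Γ)), ψ e = 1 := by
    intro e he
    -- ψ e fixes H pointwise
    have hφK : ψ e ∈ K := by
      intro h hh
      have hcomm := Subgroup.mem_centralizer_iff.mp he (SemidirectProduct.inl h)
        ⟨h, hh, rfl⟩
      have hleft := congrArg SemidirectProduct.left hcomm
      simp only [SemidirectProduct.mul_left, SemidirectProduct.mul_right,
        SemidirectProduct.left_inl, SemidirectProduct.right_inl, map_one] at hleft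
      have hleft' : h * e.left = e.left * (e.right : MulAut G) h := by
        simpa using hleft
      rw [hψeval]
      calc e.left * (e.right : MulAut G) h * e.left⁻¹
          = (h * e.left) * e.left⁻¹ := by rw [hleft']
        _ = h := by group
    -- choose a generating set for Γ and get hypercentrality of L
    obtain ⟨T, hTtop, hLhyp⟩ : ∃ T : Set Γ, Subgroup.closure T = (⊤ : Subgroup Γ) ∧
        IsHypercentral (Subgroup.closure
          ({e} ∪ (SemidirectProduct.inr : Γ →* (G ⋊[Γ.subtype] Γ)) '' T) : Subgroup (G ⋊[Γ.subtype] Γ)) := by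
      rcases hcase with hfg | hhyp
      · obtain ⟨S, hStop, hSfin⟩ := Group.fg_iff.mp hfg
        refine ⟨S, hStop, ?_⟩
        have hfin : ({e} ∪ (SemidirectProduct.inr : Γ →* (G ⋊[Γ.subtype] Γ)) '' S).Finite :=
          (Set.finite_singleton e).union (hSfin.image _)
        have hFG : (Subgroup.closure ({e} ∪ (SemidirectProduct.inr : Γ →* (G ⋊[Γ.subtype] Γ)) '' S)).FG :=
          (Subgroup.fg_iff _).mpr ⟨_, rfl, hfin⟩
        exact IsHypercentral.of_isNilpotent (hE _ hFG)
      · exact ⟨Set.univ, Subgroup.closure_univ, hhyp.subgroup _⟩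
    set L : Subgroup (G ⋊[Γ.subtype] Γ) := Subgroup.closure ({e} ∪ (SemidirectProduct.inr : Γ →* (G ⋊[Γ.subtype] Γ)) '' T)
      with hLdef
    have heL : e ∈ L := Subgroup.subset_closure (Or.inl rfl)
    set M : Subgroup (MulAut G) := L.map ψ with hMdef
    have hMhyp : IsHypercentral M :=
      IsHypercentral.of_surjective (ψ.subgroupMap L) (ψ.subgroupMap_surjective L) hLhyp
    have hφM : ψ e ∈ M := Subgroup.mem_map_of_mem ψ heL
    -- Γ ≤ M
    have hΓM : ∀ γ ∈ Γ, (γ : MulAut G) ∈ M := by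
      intro γ hγ
      have hmem : (⟨γ, hγ⟩ : Γ) ∈ Subgroup.closure T := by rw [hTtop]; trivial
      refine Subgroup.closure_induction (k := T) (p := fun u _ => (u : MulAut G) ∈ M)
        ?_ ?_ ?_ ?_ hmem
      · intro u hu
        have : (SemidirectProduct.inr : Γ →* (G ⋊[Γ.subtype] Γ)) u ∈ L :=
          Subgroup.subset_closure (Or.inr ⟨u, hu, rfl⟩)
        have := Subgroup.mem_map_of_mem ψ this
        rwa [hψinr] at this
      · simpa using Subgroup.one_mem M
      · intro a b _ _ ha hb
        have : ((a * b : Γ) : MulAut G) = (a : MulAut G) * (b : MulAut G) := rfl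
        rw [this]
        exact Subgroup.mul_mem M ha hb
      · intro a _ ha
        have : ((a⁻¹ : Γ) : MulAut G) = (a : MulAut G)⁻¹ := rfl
        rw [this]
        exact Subgroup.inv_mem M ha
    -- M normalizes K
    have hMnorm : M ≤ Subgroup.normalizer (K : Set (MulAut G)) := by
      rw [hMdef, Subgroup.map_le_iff_le_comap, hLdef, Subgroup.closure_le]
      rintro x (rfl | ⟨u, hu, rfl⟩)
      · exact Subgroup.le_normalizer hφK
      · show ψ ((SemidirectProduct.inr : Γ →* (G ⋊[Γ.subtype] Γ)) u) ∈ Subgroup.normalizer (K : Set (MulAut G))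
        rw [hψinr]
        exact hKγnorm u u.2
    -- apply the key lemma
    refine key_aux K M hMhyp ?_ ?_ hφK hφM
    · intro m hm k hk
      exact (Subgroup.mem_normalizer_iff.mp (hMnorm hm) k).mp hk
    · intro z hzK hzM hcomm
      exact hbasis z (fun γ hγ => hcomm γ (hΓM γ hγ)) hzK
  -- conclusions
  constructor
  · refine le_antisymm ?_ (Subgroup.centralizer_le ?_)
    · intro e he
      rw [Subgroup.mem_centralizer_iff]
      rintro g ⟨a, -, rfl⟩
      have h1 : ψ e = 1 := core e he
      have hx : ∀ x : G, e.left * (e.right : MulAut G) x * e.left⁻¹ = x := by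
        intro x
        rw [← hψeval, h1]
        rfl
      refine SemidirectProduct.ext ?_ ?_
      · simp only [SemidirectProduct.mul_left, SemidirectProduct.mul_right,
          SemidirectProduct.left_inl, SemidirectProduct.right_inl, map_one]
        have := hx a
        calc a * e.left = (e.left * (e.right : MulAut G) a * e.left⁻¹) * e.left := by rw [this]
          _ = e.left * (e.right : MulAut G) a := by group
          _ = e.left * (Γ.subtype e.right) a := rfl
      · simp [SemidirectProduct.mul_right]
    · intro x hx
      obtain ⟨a, -, rfl⟩ := hx
      exact ⟨a, trivial, rfl⟩
  · refine le_antisymm ?_ (Subgroup.center_le_centralizer _)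
    intro c hc
    have hmem : (SemidirectProduct.inl c : G ⋊[Γ.subtype] Γ) ∈ Subgroup.centralizer
        ((H.map (SemidirectProduct.inl : G →* (G ⋊[Γ.subtype] Γ))) : Set (G ⋊[Γ.subtype] Γ)) := by
      rw [Subgroup.mem_centralizer_iff]
      rintro g ⟨h, hh, rfl⟩
      rw [← map_mul, ← map_mul, Subgroup.mem_centralizer_iff.mp hc h hh]
    have h1 : ψ (SemidirectProduct.inl c) = 1 := core _ hmem
    rw [hψinl] at h1
    rw [Subgroup.mem_center_iff]
    intro g
    have := congrArg (fun α : MulAut G => α g) h1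
    simp only [MulAut.conj_apply, MulAut.one_apply] at this
    -- this : c * g * c⁻¹ = g
    calc g * c = (c * g * c⁻¹) * c := by rw [this]
      _ = c * g := by group
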